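/- Let W be the finite Weyl group of type Aₙ and let w = s₁s₂⋯sₙ be the Coxeter element. Then the ℤ-module (Id − w)R^∨ has ℤ-basis {α₁^∨ − α₂^∨, α₂^∨ − α₃^∨, …, α_{n−1}^∨ − αₙ^∨, (n+1)αₙ^∨}. -/

import Mathlib

/-- The matrix of the simple reflection `sᵢ` acting on the coroot lattice `ℤⁿ` in the basis
of simple coroots: `sᵢ(αⱼ^∨) = αⱼ^∨ − C i j • αᵢ^∨`, where `C` is the Cartan matrix. -/
def reflMat {n : ℕ} (C : Matrix (Fin n) (Fin n) ℤ) (i : Fin n) : Matrix (Fin n) (Fin n) ℤ :=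
  1 - Matrix.of (fun k j => if k = i then C i j else 0)

/-- The Cartan matrix of type `Aₙ`. -/
def cartanA (n : ℕ) : Matrix (Fin n) (Fin n) ℤ :=
  Matrix.of fun i j => if i = j then 2 else
    if (i : ℕ) + 1 = j ∨ (j : ℕ) + 1 = i then -1 else 0

/-- The matrix of the Coxeter element `w = s₁s₂⋯sₙ` of type `Aₙ`. -/
def coxA (n : ℕ) : Matrix (Fin n) (Fin n) ℤ :=
  (List.ofFn fun i : Fin n => reflMat (cartanA n) i).prod

namespace CoxAux

/-- Formula for the partial products `s₁ ⋯ s_k`. -/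
def P (n k : ℕ) : Matrix (Fin n) (Fin n) ℤ :=
  Matrix.of fun i j =>
    if (j : ℕ) + 1 < k then (if (i : ℕ) = (j : ℕ) + 1 then 1 else 0)
    else if (j : ℕ) + 1 = k then (if (i : ℕ) < k then -1 else 0)
    else if (j : ℕ) = k then (if (i : ℕ) ≤ k then 1 else 0)
    else (if (i : ℕ) = (j : ℕ) then 1 else 0)

lemma P_zero (n : ℕ) : P n 0 = 1 := by
  ext i j
  simp only [P, Matrix.of_apply, Matrix.one_apply, Fin.ext_iff]
  split_ifs <;> first | contradiction | omega | rfl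

lemma mul_reflMat (n : ℕ) (M C : Matrix (Fin n) (Fin n) ℤ) (k : Fin n) :
    M * reflMat C k = Matrix.of fun i j => M i j - M i k * C k j := by
  ext i j
  simp [Matrix.mul_apply, reflMat, Matrix.sub_apply, Matrix.one_apply, mul_sub,
    mul_ite, Finset.sum_sub_distrib, Finset.sum_ite_eq']

lemma P_apply_k (n k : ℕ) (hk : k < n) (i : Fin n) :
    P n k i ⟨k, hk⟩ = if (i : ℕ) ≤ k then 1 else 0 := by
  simp only [P, Matrix.of_apply, Fin.val_mk]
  split_ifs <;> first | contradiction | omega | rfl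

lemma cartanA_apply (n k : ℕ) (hk : k < n) (j : Fin n) :
    cartanA n ⟨k, hk⟩ j = if k = (j : ℕ) then 2
      else if k + 1 = (j : ℕ) ∨ (j : ℕ) + 1 = k then -1 else 0 := by
  simp only [cartanA, Matrix.of_apply, Fin.ext_iff, Fin.val_mk]

set_option maxHeartbeats 4000000 in
lemma P_succ (n k : ℕ) (hk : k < n) :
    P n k * reflMat (cartanA n) ⟨k, hk⟩ = P n (k + 1) := by
  rw [mul_reflMat]
  ext i j
  rw [Matrix.of_apply, P_apply_k n k hk i, cartanA_apply n k hk j]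
  simp only [P, Matrix.of_apply]
  split_ifs <;> first | contradiction | omega | (exfalso; omega) | ring

lemma take_prod (n : ℕ) : ∀ k, k ≤ n →
    ((List.ofFn fun i : Fin n => reflMat (cartanA n) i).take k).prod = P n k := by
  intro k
  induction k with
  | zero => intro _; simpa using (P_zero n).symm
  | succ k ih =>
    intro h
    have hk : k < n := h
    rw [List.prod_take_succ _ _ (by simpa using hk), ih hk.le]
    have hget : (List.ofFn fun i : Fin n => reflMat (cartanA n) i)[k]'(by simpa using hk)
        = reflMat (cartanA n) ⟨k, hk⟩ := by
      simp [List.getElem_ofFn]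
    rw [hget, P_succ n k hk]

lemma coxA_eq (n : ℕ) : coxA n = P n n := by
  have h := take_prod n n le_rfl
  rwa [List.take_of_length_le (by simp)] at h

/-- The matrix whose columns are the claimed basis vectors. -/
def Vm (n : ℕ) : Matrix (Fin n) (Fin n) ℤ :=
  Matrix.of fun k j =>
    ((if h : (j : ℕ) + 1 < n then
        Pi.single j 1 - Pi.single (⟨(j : ℕ) + 1, h⟩ : Fin n) 1
      else ((n : ℤ) + 1) • Pi.single j 1 : Fin n → ℤ)) k

lemma Vm_apply (n : ℕ) (k j : Fin n) :
    Vm n k j = if (k : ℕ) = (j : ℕ) then (if (j : ℕ) + 1 < n then 1 else (n : ℤ) + 1)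
      else if (k : ℕ) = (j : ℕ) + 1 ∧ (j : ℕ) + 1 < n then -1 else 0 := by
  simp only [Vm, Matrix.of_apply]
  by_cases h : (j : ℕ) + 1 < n
  · rw [dif_pos h]
    simp only [Pi.sub_apply, Pi.single_apply, Fin.ext_iff, Fin.val_mk]
    split_ifs <;> first | contradiction | omega | (exfalso; omega) | ring
  · rw [dif_neg h]
    simp only [Pi.smul_apply, Pi.single_apply, Fin.ext_iff, smul_eq_mul]
    split_ifs <;> first | contradiction | omega | (exfalso; omega) | ring

def Um (n : ℕ) : Matrix (Fin n) (Fin n) ℤ :=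
  Matrix.of fun i j => if (i : ℕ) = (j : ℕ) then 1
    else if (j : ℕ) + 1 = n then ((i : ℕ) + 1 : ℤ) else 0

def Um' (n : ℕ) : Matrix (Fin n) (Fin n) ℤ :=
  Matrix.of fun i j => if (i : ℕ) = (j : ℕ) then 1
    else if (j : ℕ) + 1 = n then -((i : ℕ) + 1 : ℤ) else 0

def Wm (n : ℕ) : Matrix (Fin n) (Fin n) ℤ :=
  Matrix.of fun i j => if (i : ℕ) + 1 = n then 1
    else if (j : ℕ) ≤ (i : ℕ) then (n : ℤ) + 1 else 0

lemma fin_sum_pair {n : ℕ} (f : Fin n → ℤ) (a b : Fin n) (hab : a ≠ b)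
    (h : ∀ c, c ≠ a → c ≠ b → f c = 0) : ∑ l, f l = f a + f b :=
  Finset.sum_eq_add a b hab (fun c _ hc => h c hc.1 hc.2)
    (fun h' => absurd (Finset.mem_univ a) h') (fun h' => absurd (Finset.mem_univ b) h')

lemma fin_sum_single {n : ℕ} (f : Fin n → ℤ) (a : Fin n)
    (h : ∀ c, c ≠ a → f c = 0) : ∑ l, f l = f a :=
  Finset.sum_eq_single a (fun c _ hc => h c hc) (fun h' => absurd (Finset.mem_univ a) h')

set_option maxHeartbeats 4000000 in
lemma VU (n : ℕ) : Vm n * Um n = 1 - coxA n := by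
  rw [coxA_eq n]
  ext i j
  rw [Matrix.mul_apply]
  by_cases hi : 1 ≤ (i : ℕ)
  · rw [fin_sum_pair _ i ⟨(i : ℕ) - 1, by omega⟩
      (by simp only [ne_eq, Fin.ext_iff, Fin.val_mk]; omega)
      (fun c hca hcb => by
        simp only [ne_eq, Fin.ext_iff, Fin.val_mk] at hca hcb
        rw [Vm_apply]
        simp only [Um, Matrix.of_apply]
        split_ifs <;> first | contradiction | omega | (exfalso; omega) | ring)]
    rw [Vm_apply, Vm_apply]
    simp only [Um, P, Matrix.of_apply, Matrix.sub_apply, Matrix.one_apply,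
      Fin.ext_iff, Fin.val_mk, true_and, and_true]
    split_ifs <;> first | contradiction | omega | (exfalso; omega) | ring
  · rw [fin_sum_single _ i
      (fun c hca => by
        simp only [ne_eq, Fin.ext_iff] at hca
        rw [Vm_apply]
        simp only [Um, Matrix.of_apply]
        split_ifs <;> first | contradiction | omega | (exfalso; omega) | ring)]
    rw [Vm_apply]
    simp only [Um, P, Matrix.of_apply, Matrix.sub_apply, Matrix.one_apply, Fin.ext_iff]
    split_ifs <;> first | contradiction | omega | (exfalso; omega) | ring

set_option maxHeartbeats 1000000 in
lemma UU' (n : ℕ) (hn : 1 ≤ n) : Um n * Um' n = 1 := by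
  ext i j
  rw [Matrix.mul_apply]
  by_cases hi : (i : ℕ) + 1 = n
  · rw [fin_sum_single _ i
      (fun c hca => by
        simp only [ne_eq, Fin.ext_iff] at hca
        simp only [Um, Um', Matrix.of_apply]
        split_ifs <;> first | contradiction | omega | (exfalso; omega) | ring)]
    simp only [Um, Um', Matrix.of_apply, Matrix.one_apply, Fin.ext_iff]
    split_ifs <;> first | contradiction | omega | (exfalso; omega) | ring
  · rw [fin_sum_pair _ i ⟨n - 1, by omega⟩
      (by simp only [ne_eq, Fin.ext_iff, Fin.val_mk]; omega)
      (fun c hca hcb => by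
        simp only [ne_eq, Fin.ext_iff, Fin.val_mk] at hca hcb
        simp only [Um, Um', Matrix.of_apply]
        split_ifs <;> first | contradiction | omega | (exfalso; omega) | ring)]
    simp only [Um, Um', Matrix.of_apply, Matrix.one_apply, Fin.ext_iff, Fin.val_mk]
    split_ifs <;> first | contradiction | omega | (exfalso; omega) | ring

set_option maxHeartbeats 1000000 in
lemma WV (n : ℕ) : Wm n * Vm n = ((n : ℤ) + 1) • 1 := by
  ext i j
  rw [Matrix.mul_apply]
  by_cases hj : (j : ℕ) + 1 < n
  · rw [fin_sum_pair _ j ⟨(j : ℕ) + 1, hj⟩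
      (by simp only [ne_eq, Fin.ext_iff, Fin.val_mk]; omega)
      (fun c hca hcb => by
        simp only [ne_eq, Fin.ext_iff, Fin.val_mk] at hca hcb
        rw [Vm_apply]
        simp only [Wm, Matrix.of_apply]
        split_ifs <;> first | contradiction | omega | (exfalso; omega) | ring)]
    rw [Vm_apply, Vm_apply]
    simp only [Wm, Matrix.of_apply, Matrix.smul_apply, Matrix.one_apply,
      Fin.ext_iff, Fin.val_mk, smul_eq_mul, true_and, and_true]
    split_ifs <;> first | contradiction | omega | (exfalso; omega) | ring
  · rw [fin_sum_single _ j
      (fun c hca => by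
        simp only [ne_eq, Fin.ext_iff] at hca
        rw [Vm_apply]
        simp only [Wm, Matrix.of_apply]
        split_ifs <;> first | contradiction | omega | (exfalso; omega) | ring)]
    rw [Vm_apply]
    simp only [Wm, Matrix.of_apply, Matrix.smul_apply, Matrix.one_apply,
      Fin.ext_iff, smul_eq_mul]
    split_ifs <;> first | contradiction | omega | (exfalso; omega) | ring

end CoxAux

open CoxAux

theorem basis_modSet_coxeter_typeA (n : ℕ) (hn : 1 ≤ n) :
    ∃ b : Module.Basis (Fin n) ℤ
        (LinearMap.range (Matrix.toLin' ((1 : Matrix (Fin n) (Fin n) ℤ) - coxA n))),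
      ∀ i : Fin n, (b i : Fin n → ℤ) =
        if h : (i : ℕ) + 1 < n then
          Pi.single i 1 - Pi.single (⟨(i : ℕ) + 1, h⟩ : Fin n) 1
        else ((n : ℤ) + 1) • Pi.single i 1 := by
  classical
  have hUsurj : Function.Surjective (Matrix.toLin' (Um n)) := by
    intro y
    exact ⟨Matrix.toLin' (Um' n) y, by
      rw [← Matrix.toLin'_mul_apply, UU' n hn, Matrix.toLin'_one, LinearMap.id_apply]⟩
  have hVinj : Function.Injective (Matrix.toLin' (Vm n)) := by
    have hcomp : ∀ x : Fin n → ℤ,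
        Matrix.toLin' (Wm n) (Matrix.toLin' (Vm n) x) = ((n : ℤ) + 1) • x := by
      intro x
      rw [← Matrix.toLin'_mul_apply, WV n, map_smul, Matrix.toLin'_one,
        LinearMap.smul_apply, LinearMap.id_apply]
    intro x y h
    have h2 := hcomp x
    rw [h, hcomp y] at h2
    exact smul_right_injective (Fin n → ℤ) (by positivity) h2.symm
  have hrange : LinearMap.range (Matrix.toLin' ((1 : Matrix (Fin n) (Fin n) ℤ) - coxA n))
      = LinearMap.range (Matrix.toLin' (Vm n)) := by
    rw [← VU n, Matrix.toLin'_mul, LinearMap.range_comp,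
      LinearMap.range_eq_top.mpr hUsurj, Submodule.map_top]
  refine ⟨((Pi.basisFun ℤ (Fin n)).map
      (LinearEquiv.ofInjective (Matrix.toLin' (Vm n)) hVinj)).map
      (LinearEquiv.ofEq _ _ hrange.symm), fun i => ?_⟩
  simp only [Module.Basis.map_apply, LinearEquiv.coe_ofEq_apply, LinearEquiv.ofInjective_apply,
    Pi.basisFun_apply, Matrix.toLin'_apply, Matrix.mulVec_single_one]
  funext k
  simp only [Matrix.transpose_apply, Matrix.col_apply, Vm, Matrix.of_apply]
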